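/- Let P : ℂ[x₁,...,x_d] → ℂ[x₁,...,x_d] be a linear idempotent map whose image is the span of {1, x₁, ..., x_d}, and suppose P(gh) = P(g·P(h)) for all polynomials g, h. Then P is uniquely determined by its values P(x_i x_j) for 1 ≤ i, j ≤ d; i.e., if P₁, P₂ are two such maps with P₁(x_i x_j) = P₂(x_i x_j) for all i, j, then P₁ = P₂. -/

import Mathlib

open MvPolynomial

/-- An ideal projector onto span{1,x₁,...,x_d} is uniquely determined by its
values on the products xᵢxⱼ. -/
theorem ideal_projector_determined_by_quadratic_values (d : ℕ)
    (P₁ P₂ : MvPolynomial (Fin d) ℂ →ₗ[ℂ] MvPolynomial (Fin d) ℂ)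
    (hidem₁ : ∀ g, P₁ (P₁ g) = P₁ g) (hidem₂ : ∀ g, P₂ (P₂ g) = P₂ g)
    (hrange₁ : LinearMap.range P₁ =
      Submodule.span ℂ ({1} ∪ Set.range (X : Fin d → MvPolynomial (Fin d) ℂ)))
    (hrange₂ : LinearMap.range P₂ =
      Submodule.span ℂ ({1} ∪ Set.range (X : Fin d → MvPolynomial (Fin d) ℂ)))
    (hdB₁ : ∀ g h : MvPolynomial (Fin d) ℂ, P₁ (g * h) = P₁ (g * P₁ h))
    (hdB₂ : ∀ g h : MvPolynomial (Fin d) ℂ, P₂ (g * h) = P₂ (g * P₂ h))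
    (hagree : ∀ i j : Fin d, P₁ (X i * X j) = P₂ (X i * X j)) :
    P₁ = P₂ := by
  have hfix₁ : ∀ y ∈ LinearMap.range P₁, P₁ y = y := by
    rintro y ⟨g, rfl⟩; exact hidem₁ g
  have hfix₂ : ∀ y ∈ LinearMap.range P₂, P₂ y = y := by
    rintro y ⟨g, rfl⟩; exact hidem₂ g
  have h1mem : (1 : MvPolynomial (Fin d) ℂ) ∈
      Submodule.span ℂ (({1} : Set (MvPolynomial (Fin d) ℂ)) ∪ Set.range X) :=
    Submodule.subset_span (Or.inl rfl)
  have hXmem : ∀ i : Fin d, (X i : MvPolynomial (Fin d) ℂ) ∈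
      Submodule.span ℂ (({1} : Set (MvPolynomial (Fin d) ℂ)) ∪ Set.range X) :=
    fun i => Submodule.subset_span (Or.inr ⟨i, rfl⟩)
  have hP₁1 : P₁ 1 = 1 := hfix₁ 1 (hrange₁ ▸ h1mem)
  have hP₂1 : P₂ 1 = 1 := hfix₂ 1 (hrange₂ ▸ h1mem)
  have hP₁X : ∀ i, P₁ (X i) = X i := fun i => hfix₁ _ (hrange₁ ▸ hXmem i)
  have hP₂X : ∀ i, P₂ (X i) = X i := fun i => hfix₂ _ (hrange₂ ▸ hXmem i)
  have key : ∀ (i : Fin d) (y : MvPolynomial (Fin d) ℂ),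
      y ∈ Submodule.span ℂ (({1} : Set (MvPolynomial (Fin d) ℂ)) ∪ Set.range X) →
      P₁ (X i * y) = P₂ (X i * y) := by
    intro i y hy
    induction hy using Submodule.span_induction with
    | mem z hz =>
      rcases hz with rfl | ⟨j, rfl⟩
      · rw [mul_one, hP₁X, hP₂X]
      · exact hagree i j
    | zero => rw [mul_zero, map_zero, map_zero]
    | add a b _ _ ha hb => rw [mul_add, map_add, map_add, ha, hb]
    | smul c a _ ha => rw [mul_smul_comm, map_smul, map_smul, ha]
  apply LinearMap.ext; intro p
  induction p using MvPolynomial.induction_on with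
  | C a =>
    have : (C a : MvPolynomial (Fin d) ℂ) = a • 1 := by
      rw [smul_eq_C_mul, mul_one]
    rw [this, map_smul, map_smul, hP₁1, hP₂1]
  | add p q hp hq =>
    rw [map_add, map_add, hp, hq]
  | mul_X p i hp =>
    have hmem : P₁ p ∈ Submodule.span ℂ
        (({1} : Set (MvPolynomial (Fin d) ℂ)) ∪ Set.range X) :=
      hrange₁ ▸ LinearMap.mem_range_self _ p
    calc P₁ (p * X i) = P₁ (X i * P₁ p) := by rw [mul_comm, hdB₁]
    _ = P₂ (X i * P₁ p) := key i _ hmem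
    _ = P₂ (X i * P₂ p) := by rw [hp]
    _ = P₂ (p * X i) := by rw [← hdB₂, mul_comm]
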